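/- If D is a connected 3-dominating set of a connected graph G with minimum degree at least 3, then rx₃(G) ≤ rx₃(G[D]) + 3. -/

import Mathlib

open SimpleGraph

/-- `c` is a `k`-rainbow coloring of `G`: every set of `k` vertices is contained in some
subtree of `G` whose edges receive pairwise distinct colors. -/
def SimpleGraph.IsKRainbowColoring {V : Type*} (G : SimpleGraph V) {t : ℕ}
    (c : Sym2 V → Fin t) (k : ℕ) : Prop :=
  ∀ S : Finset V, S.card = k →
    ∃ T : G.Subgraph, T.coe.IsTree ∧ ↑S ⊆ T.verts ∧ Set.InjOn c T.edgeSet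

/-- The `k`-rainbow index of `G`: the least number of colors in a `k`-rainbow coloring. -/
noncomputable def SimpleGraph.rx {V : Type*} (G : SimpleGraph V) (k : ℕ) : ℕ :=
  sInf {t | ∃ c : Sym2 V → Fin t, G.IsKRainbowColoring c k}

namespace RxAux

variable {V : Type*} {G : SimpleGraph V}

/-- Homomorphism from a subgraph's coe to its spanningCoe. -/
def toSpan (H : G.Subgraph) : H.coe →g H.spanningCoe :=
  ⟨Subtype.val, fun h => h⟩

lemma toSpan_injective (H : G.Subgraph) : Function.Injective (toSpan H) :=
  Subtype.val_injective

lemma exists_walk_coe (H : G.Subgraph) : ∀ {u v : V} (p : H.spanningCoe.Walk u v)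
    (hu : u ∈ H.verts) (hv : v ∈ H.verts),
    ∃ q : H.coe.Walk ⟨u, hu⟩ ⟨v, hv⟩, q.map (toSpan H) = p := by
  intro u v p
  induction p with
  | nil => intro hu hv; exact ⟨SimpleGraph.Walk.nil, rfl⟩
  | @cons a b c h p ih =>
    intro hu hv
    obtain ⟨q, hq⟩ := ih (H.edge_vert (H.adj_symm h)) hv
    refine ⟨SimpleGraph.Walk.cons (show H.coe.Adj ⟨a, hu⟩ ⟨b, H.edge_vert (H.adj_symm h)⟩ from h) q, ?_⟩
    rw [SimpleGraph.Walk.map_cons, hq]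
    rfl

lemma spanning_acyclic_of_coe {H : G.Subgraph} (h : H.coe.IsAcyclic) :
    H.spanningCoe.IsAcyclic := by
  intro a c hc
  have ha : a ∈ H.verts := by
    cases c with
    | nil => exact absurd rfl hc.ne_nil
    | cons hadj p => exact hadj.fst_mem
  obtain ⟨q, hq⟩ := exists_walk_coe H c ha ha
  have hqc : q.IsCycle := by
    rw [← SimpleGraph.Walk.map_isCycle_iff_of_injective (toSpan_injective H), hq]
    exact hc
  exact h q hqc

lemma coe_acyclic_of_spanning {H : G.Subgraph} (h : H.spanningCoe.IsAcyclic) :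
    H.coe.IsAcyclic := fun _ c hc =>
  h (c.map (toSpan H)) (hc.map (toSpan_injective H))

lemma isTree_coe_iff (H : G.Subgraph) :
    H.coe.IsTree ↔ H.Connected ∧ H.spanningCoe.IsAcyclic := by
  constructor
  · rintro ⟨hc, ha⟩
    exact ⟨⟨hc⟩, spanning_acyclic_of_coe ha⟩
  · rintro ⟨hc, ha⟩
    exact ⟨hc.coe, coe_acyclic_of_spanning ha⟩


lemma only_neighbor {T : G.Subgraph} {v w : V} (hw : w ∉ T.verts) (hadj : G.Adj v w)
    {y : V} (h : (T ⊔ G.subgraphOfAdj hadj).spanningCoe.Adj w y) : y = v := by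
  rw [SimpleGraph.Subgraph.spanningCoe_adj, SimpleGraph.Subgraph.sup_adj] at h
  rcases h with h | h
  · exact absurd h.fst_mem hw
  · rw [SimpleGraph.subgraphOfAdj_adj] at h
    rw [Sym2.eq_iff] at h
    rcases h with ⟨h1, h2⟩ | ⟨h1, h2⟩
    · exact absurd h1 hadj.ne
    · exact h1.symm

lemma pendant {T : G.Subgraph} (hc : T.Connected) (ha : T.spanningCoe.IsAcyclic)
    {v w : V} (hv : v ∈ T.verts) (hw : w ∉ T.verts) (hadj : G.Adj v w) :
    (T ⊔ G.subgraphOfAdj hadj).Connected ∧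
      (T ⊔ G.subgraphOfAdj hadj).spanningCoe.IsAcyclic := by
  classical
  constructor
  · exact SimpleGraph.Subgraph.connected_sup hc.preconnected
      (SimpleGraph.Subgraph.subgraphOfAdj_connected hadj).preconnected ⟨v, by simp [hv]⟩
  · intro a c hcyc
    by_cases he : s(v, w) ∈ c.edges
    · -- cycle uses the pendant edge, contradiction at w
      have hwsup : w ∈ c.support := SimpleGraph.Walk.snd_mem_support_of_mem_edges c he
      have hcyc' : (c.rotate w hwsup).IsCycle := hcyc.rotate hwsup
      obtain ⟨x, hx, q, hq⟩ := SimpleGraph.Walk.not_nil_iff.mp hcyc'.not_nil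
      have hxv : x = v := only_neighbor hw hadj hx
      rw [hq, SimpleGraph.Walk.cons_isCycle_iff] at hcyc'
      have hwx : w ≠ x := fun hcontra => hadj.ne (hxv ▸ hcontra.symm)
      obtain ⟨y, hy, q2, hq2⟩ := SimpleGraph.Walk.exists_eq_cons_of_ne hwx q.reverse
      have hyv : y = v := only_neighbor hw hadj hy
      have hmem : s(w, y) ∈ q.reverse.edges := by
        rw [hq2, SimpleGraph.Walk.edges_cons]
        exact List.mem_cons_self
      rw [SimpleGraph.Walk.edges_reverse, List.mem_reverse] at hmem
      apply hcyc'.2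
      have heq : s(w, x) = s(w, y) := by rw [hxv, hyv]
      exact heq ▸ hmem
    · -- cycle avoids the pendant edge, transfer to T
      have hsub : ∀ e ∈ c.edges, e ∈ T.spanningCoe.edgeSet := by
        intro e hecyc
        have hmem := c.edges_subset_edgeSet hecyc
        induction e with
        | h x y =>
          rw [SimpleGraph.mem_edgeSet, SimpleGraph.Subgraph.spanningCoe_adj,
            SimpleGraph.Subgraph.sup_adj] at hmem
          rcases hmem with h | h
          · exact h
          · rw [SimpleGraph.subgraphOfAdj_adj] at h
            exact absurd (h ▸ hecyc) he
      exact ha (c.transfer _ hsub) (hcyc.transfer hsub)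

lemma attach {T : G.Subgraph} (hc : T.Connected)
    (ha : T.spanningCoe.IsAcyclic) (u a : V)
    (h : u ∈ T.verts ∨ (u ∉ T.verts ∧ a ∈ T.verts ∧ G.Adj a u)) :
    ∃ T2 : G.Subgraph, T ≤ T2 ∧ T2.Connected ∧ T2.spanningCoe.IsAcyclic ∧ u ∈ T2.verts ∧
      T2.verts ⊆ T.verts ∪ {u} ∧ T2.edgeSet ⊆ T.edgeSet ∪ {s(a, u)} ∧
      (u ∈ T.verts → T2 = T) := by
  rcases h with h | ⟨hu, haT, hadj⟩
  · exact ⟨T, le_rfl, hc, ha, h, by simp, by simp, fun _ => rfl⟩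
  · obtain ⟨h1, h2⟩ := pendant hc ha haT hu hadj
    refine ⟨T ⊔ G.subgraphOfAdj hadj, le_sup_left, h1, h2, by simp, ?_, ?_,
      fun hx => absurd hx hu⟩
    · rw [SimpleGraph.Subgraph.verts_sup, SimpleGraph.subgraphOfAdj_verts]
      intro t ht
      simp only [Set.mem_union, Set.mem_insert_iff, Set.mem_singleton_iff] at ht ⊢
      rcases ht with ht | rfl | rfl
      · exact Or.inl ht
      · exact Or.inl haT
      · exact Or.inr rfl
    · rw [SimpleGraph.Subgraph.edgeSet_sup, SimpleGraph.edgeSet_subgraphOfAdj]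


lemma exists_spanning_goodtree {W : Type*} [Fintype W] {G' : SimpleGraph W}
    (h : G'.Connected) :
    ∃ T : G'.Subgraph, T.Connected ∧ T.spanningCoe.IsAcyclic ∧ ∀ x, x ∈ T.verts := by
  classical
  obtain ⟨v0⟩ := h.nonempty
  suffices H : ∀ (n : ℕ) (T : G'.Subgraph), T.Connected → T.spanningCoe.IsAcyclic →
      T.vertsᶜ.ncard = n →
      ∃ T2 : G'.Subgraph, T2.Connected ∧ T2.spanningCoe.IsAcyclic ∧ ∀ x, x ∈ T2.verts by
    refine H _ (G'.singletonSubgraph v0) SimpleGraph.Subgraph.singletonSubgraph_connected ?_ rfl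
    intro a c hcyc
    cases c with
    | nil => exact hcyc.ne_nil rfl
    | cons hadj p => simp [SimpleGraph.singletonSubgraph] at hadj
  intro n
  induction n using Nat.strong_induction_on with
  | _ n ih =>
    intro T hc ha hcard
    by_cases hall : ∀ x, x ∈ T.verts
    · exact ⟨T, hc, ha, hall⟩
    · push_neg at hall
      obtain ⟨w, hw⟩ := hall
      obtain ⟨u0, hu0⟩ := hc.nonempty
      obtain ⟨p⟩ := h.preconnected u0 w
      obtain ⟨d, hd, hd1, hd2⟩ := p.exists_boundary_dart T.verts hu0 hw
      obtain ⟨h1, h2⟩ := pendant hc ha hd1 hd2 d.adj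
      refine ih ((T ⊔ G'.subgraphOfAdj d.adj).vertsᶜ.ncard) ?_ _ h1 h2 rfl
      rw [← hcard]
      apply Set.ncard_lt_ncard _ (Set.toFinite _)
      constructor
      · exact Set.compl_subset_compl.mpr (SimpleGraph.Subgraph.verts_mono le_sup_left)
      · intro hsub
        have hds : d.snd ∈ (T ⊔ G'.subgraphOfAdj d.adj).verts := by simp
        exact (hsub hd2) hds


def spanHom {W W' : Type*} {G1 : SimpleGraph W} {G2 : SimpleGraph W'} (f : G1 →g G2)
    (H : G1.Subgraph) : H.spanningCoe →g (H.map f).spanningCoe :=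
  ⟨f, fun {a b} h => ⟨a, b, h, rfl, rfl⟩⟩

lemma exists_walk_map_preimage {W W' : Type*} {G1 : SimpleGraph W} {G2 : SimpleGraph W'}
    (f : G1 →g G2) (hf : Function.Injective f) (H : G1.Subgraph) :
    ∀ {u' v' : W'} (p : (H.map f).spanningCoe.Walk u' v') (u v : W)
      (hu : f u = u') (hv : f v = v'),
      ∃ q : H.spanningCoe.Walk u v, q.map (spanHom f H) = p.copy hu.symm hv.symm := by
  intro u' v' p
  induction p with
  | nil =>
    intro u v hu hv
    have huv : u = v := hf (by rw [hu, hv])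
    subst huv
    subst hu
    exact ⟨SimpleGraph.Walk.nil, rfl⟩
  | @cons a b c hadj p ih =>
    intro u v hu hv
    subst hu
    subst hv
    obtain ⟨a0, b0, hab, ha0, hb0⟩ := hadj
    have hau : a0 = u := hf ha0
    subst hau
    subst hb0
    obtain ⟨q, hq⟩ := ih b0 v rfl rfl
    refine ⟨SimpleGraph.Walk.cons (show H.spanningCoe.Adj _ _ from hab) q, ?_⟩
    rw [SimpleGraph.Walk.map_cons, hq]
    rfl

lemma map_good {W W' : Type*} {G1 : SimpleGraph W} {G2 : SimpleGraph W'} (f : G1 →g G2)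
    (hf : Function.Injective f) {H : G1.Subgraph} (h1 : H.Connected)
    (h2 : H.spanningCoe.IsAcyclic) :
    (H.map f).Connected ∧ (H.map f).spanningCoe.IsAcyclic := by
  constructor
  · refine ⟨SimpleGraph.Connected.map
      (⟨fun a => ⟨f a.1, Set.mem_image_of_mem f a.2⟩,
        by rintro ⟨a, ha⟩ ⟨b, hb⟩ hab; exact ⟨a, b, hab, rfl, rfl⟩⟩ : H.coe →g (H.map f).coe)
      ?_ h1.coe⟩
    rintro ⟨b, hb⟩
    obtain ⟨a, ha, rfl⟩ := hb
    exact ⟨⟨a, ha⟩, rfl⟩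
  · intro a c hcyc
    obtain ⟨u, hu⟩ : ∃ u, f u = a := by
      cases c with
      | nil => exact absurd rfl hcyc.ne_nil
      | cons hadj p =>
        obtain ⟨a0, b0, _, ha0, _⟩ := hadj
        exact ⟨a0, ha0⟩
    obtain ⟨q, hq⟩ := exists_walk_map_preimage f hf H c u u hu hu
    have hspan_inj : Function.Injective (spanHom f H) := hf
    have hqc : q.IsCycle := by
      rw [← SimpleGraph.Walk.map_isCycle_iff_of_injective hspan_inj, hq]
      exact (SimpleGraph.Walk.isCycle_copy _ _).mpr hcyc
    exact h2 q hqc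


lemma rainbow_nonempty {W : Type*} [Finite W] {G' : SimpleGraph W} (h : G'.Connected) (k : ℕ) :
    {t | ∃ c : Sym2 W → Fin t, G'.IsKRainbowColoring c k}.Nonempty := by
  classical
  haveI := Fintype.ofFinite W
  obtain ⟨T, hc, ha, hv⟩ := exists_spanning_goodtree h
  refine ⟨Fintype.card (Sym2 W), ⇑(Fintype.equivFin (Sym2 W)), ?_⟩
  intro S hS
  exact ⟨T, (isTree_coe_iff T).mpr ⟨hc, ha⟩, fun x _ => hv x,
    (Fintype.equivFin (Sym2 W)).injective.injOn⟩


section Coloring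

variable {V : Type*} (D : Set V) [DecidablePred (· ∈ D)] [DecidableEq V]

/-- Pendant colors: an outside vertex `o` colors the edge to its anchor `d`. -/
def pcol {r : ℕ} (X Y : V → V) (o d : V) : Fin (r + 3) :=
  if d = X o then ⟨r, by omega⟩ else if d = Y o then ⟨r + 1, by omega⟩ else ⟨r + 2, by omega⟩

lemma pcol_X {r : ℕ} (X Y : V → V) (o : V) : (pcol (r := r) X Y o (X o)).val = r := by
  simp [pcol]

lemma pcol_Y {r : ℕ} (X Y : V → V) (o : V) (h : X o ≠ Y o) :
    (pcol (r := r) X Y o (Y o)).val = r + 1 := by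
  rw [pcol, if_neg (Ne.symm h), if_pos rfl]

lemma pcol_Z {r : ℕ} (X Y : V → V) (o d : V) (h1 : X o ≠ d) (h2 : Y o ≠ d) :
    (pcol (r := r) X Y o d).val = r + 2 := by
  rw [pcol, if_neg (Ne.symm h1), if_neg (Ne.symm h2)]

/-- The extended coloring. -/
def thecol {r : ℕ} (cD : Sym2 ↥D → Fin r) (X Y : V → V) : Sym2 V → Fin (r + 3) :=
  Sym2.lift ⟨fun u v =>
    if hu : u ∈ D then
      (if hv : v ∈ D then Fin.castLE (by omega) (cD s(⟨u, hu⟩, ⟨v, hv⟩))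
       else pcol X Y v u)
    else (if v ∈ D then pcol X Y u v else ⟨r, by omega⟩), by
    intro u v
    by_cases hu : u ∈ D <;> by_cases hv : v ∈ D <;>
      simp only [hu, hv, dif_pos, dif_neg, not_false_iff, if_pos, if_neg]
    rw [Sym2.eq_swap]⟩

lemma thecol_DD {r : ℕ} (cD : Sym2 ↥D → Fin r) (X Y : V → V) {a b : V}
    (ha : a ∈ D) (hb : b ∈ D) :
    thecol D cD X Y s(a, b) = Fin.castLE (by omega) (cD s(⟨a, ha⟩, ⟨b, hb⟩)) := by
  rw [thecol, Sym2.lift_mk]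
  dsimp only
  rw [dif_pos ha, dif_pos hb]

lemma thecol_pend {r : ℕ} (cD : Sym2 ↥D → Fin r) (X Y : V → V) {u d : V}
    (hu : u ∉ D) (hd : d ∈ D) :
    thecol D cD X Y s(d, u) = pcol X Y u d := by
  rw [thecol, Sym2.lift_mk]
  dsimp only
  rw [dif_pos hd, dif_neg hu]

end Coloring


lemma three_distinct {a : Type*} {s : Set a} (hfin : s.Finite) (h3 : 3 ≤ s.ncard) :
    ∃ x y z, x ∈ s ∧ y ∈ s ∧ z ∈ s ∧ x ≠ y ∧ x ≠ z ∧ y ≠ z := by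
  classical
  rw [Set.ncard_eq_toFinset_card _ hfin] at h3
  obtain ⟨t, hts, htc⟩ := Finset.exists_subset_card_eq h3
  obtain ⟨x, y, z, hxy, hxz, hyz, rfl⟩ := Finset.card_eq_three.mp htc
  exact ⟨x, y, z, hfin.mem_toFinset.mp (hts (by simp)),
    hfin.mem_toFinset.mp (hts (by simp)), hfin.mem_toFinset.mp (hts (by simp)), hxy, hxz, hyz⟩

end RxAux

/-- If `D` is a connected 3-dominating set of a connected graph `G` with minimum degree at
least 3, then `rx₃(G) ≤ rx₃(G[D]) + 3`. -/
theorem stmt3 {V : Type*} [Fintype V] (G : SimpleGraph V) (hG : G.Connected)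
    (hδ : ∀ v : V, 3 ≤ (G.neighborSet v).ncard) (D : Set V)
    (hDconn : (G.induce D).Connected)
    (hDdom : ∀ v ∉ D, 3 ≤ (D ∩ G.neighborSet v).ncard) :
    G.rx 3 ≤ (G.induce D).rx 3 + 3 := by
  classical
  set r := (G.induce D).rx 3 with hr
  have hne := RxAux.rainbow_nonempty hDconn 3
  have hmem : r ∈ {t | ∃ c : Sym2 ↥D → Fin t, (G.induce D).IsKRainbowColoring c 3} :=
    Nat.sInf_mem hne
  obtain ⟨cD, hcD⟩ := hmem
  -- choose, for each vertex outside D, three distinct neighbors inside D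
  have hchoice : ∀ v : V, ∃ x y z : V, v ∉ D →
      x ∈ D ∧ y ∈ D ∧ z ∈ D ∧ G.Adj v x ∧ G.Adj v y ∧ G.Adj v z ∧ x ≠ y ∧ x ≠ z ∧ y ≠ z := by
    intro v
    by_cases hv : v ∉ D
    · obtain ⟨x, y, z, hx, hy, hz, hxy, hxz, hyz⟩ :=
        RxAux.three_distinct (Set.toFinite _) (hDdom v hv)
      exact ⟨x, y, z, fun _ => ⟨hx.1, hy.1, hz.1, hx.2, hy.2, hz.2, hxy, hxz, hyz⟩⟩
    · exact ⟨v, v, v, fun h => absurd h hv⟩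
  choose X Y Z hXYZ using hchoice
  set c' : Sym2 V → Fin (r + 3) := RxAux.thecol D cD X Y with hc'
  refine Nat.sInf_le ⟨c', ?_⟩
  intro S hS
  obtain ⟨x, y, z, hxy, hxz, hyz, rfl⟩ := Finset.card_eq_three.mp hS
  -- anchors
  set ax : V := if x ∈ D then x else X x with haxdef
  set ay : V := if y ∈ D then y else Y y with haydef
  set az : V := if z ∈ D then z else Z z with hazdef
  have haxD : ax ∈ D := by
    rw [haxdef]; split_ifs with h
    · exact h
    · exact (hXYZ x h).1
  have hayD : ay ∈ D := by
    rw [haydef]; split_ifs with h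
    · exact h
    · exact (hXYZ y h).2.1
  have hazD : az ∈ D := by
    rw [hazdef]; split_ifs with h
    · exact h
    · exact (hXYZ z h).2.2.1
  have haxin : x ∈ D → ax = x := fun h => by rw [haxdef, if_pos h]
  have hayin : y ∈ D → ay = y := fun h => by rw [haydef, if_pos h]
  have hazin : z ∈ D → az = z := fun h => by rw [hazdef, if_pos h]
  have haxout : x ∉ D → ax = X x := fun h => by rw [haxdef, if_neg h]
  have hayout : y ∉ D → ay = Y y := fun h => by rw [haydef, if_neg h]
  have hazout : z ∉ D → az = Z z := fun h => by rw [hazdef, if_neg h]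
  -- D has at least 3 elements
  have hD3 : 3 ≤ Fintype.card ↥D := by
    have hout : ∀ v : V, v ∉ D → 3 ≤ Fintype.card ↥D := by
      intro v hv
      have h1 : 3 ≤ (D ∩ G.neighborSet v).ncard := hDdom v hv
      have h2 : (D ∩ G.neighborSet v).ncard ≤ D.ncard :=
        Set.ncard_le_ncard Set.inter_subset_left (Set.toFinite D)
      have h3 : D.ncard = Fintype.card ↥D := by
        rw [Set.ncard_eq_toFinset_card' D, Set.toFinset_card]
      omega
    by_cases hx : x ∈ D
    · by_cases hy : y ∈ D
      · by_cases hz : z ∈ D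
        · have hcard : ({⟨x, hx⟩, ⟨y, hy⟩, ⟨z, hz⟩} : Finset ↥D).card = 3 := by
            rw [Finset.card_insert_of_notMem (by simp [Subtype.ext_iff, hxy, hxz]),
              Finset.card_insert_of_notMem (by simp [Subtype.ext_iff, hyz]),
              Finset.card_singleton]
          rw [← hcard]
          exact Finset.card_le_univ _
        · exact hout z hz
      · exact hout y hy
    · exact hout x hx
  -- a 3-set of D containing the anchors
  have hS0card : ({⟨ax, haxD⟩, ⟨ay, hayD⟩, ⟨az, hazD⟩} : Finset ↥D).card ≤ 3 := by
    refine (Finset.card_insert_le _ _).trans ?_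
    refine Nat.add_le_add_right ((Finset.card_insert_le _ _).trans ?_) 1
    simp
  obtain ⟨S', hS0S', hS'card⟩ := Finset.exists_subsuperset_card_eq
    (Finset.subset_univ ({⟨ax, haxD⟩, ⟨ay, hayD⟩, ⟨az, hazD⟩} : Finset ↥D)) hS0card
    (by rw [Finset.card_univ]; exact hD3)
  obtain ⟨T', hT'tree, hT'verts, hT'inj⟩ := hcD S' hS'card.2
  obtain ⟨hT'conn, hT'acyc⟩ := (RxAux.isTree_coe_iff T').mp hT'tree
  -- map the tree into G
  set f : G.induce D →g G := (SimpleGraph.Embedding.induce D).toHom with hfdef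
  have hfinj : Function.Injective f := Subtype.val_injective
  set T0 : G.Subgraph := T'.map f with hT0def
  obtain ⟨hT0conn, hT0acyc⟩ := RxAux.map_good f hfinj hT'conn hT'acyc
  have hT0vertsD : T0.verts ⊆ D := by
    rintro _ ⟨a, ha, rfl⟩
    exact a.2
  have haxT0 : ax ∈ T0.verts :=
    ⟨⟨ax, haxD⟩, hT'verts (Finset.mem_coe.mpr (hS0S' (Finset.mem_insert_self _ _))), rfl⟩
  have hayT0 : ay ∈ T0.verts :=
    ⟨⟨ay, hayD⟩, hT'verts (Finset.mem_coe.mpr (hS0S'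
      (Finset.mem_insert_of_mem (Finset.mem_insert_self _ _)))), rfl⟩
  have hazT0 : az ∈ T0.verts :=
    ⟨⟨az, hazD⟩, hT'verts (Finset.mem_coe.mpr (hS0S'
      (Finset.mem_insert_of_mem (Finset.mem_insert_of_mem (Finset.mem_singleton_self _))))), rfl⟩
  -- attach x
  obtain ⟨T1, h01, hT1conn, hT1acyc, hxT1, hT1verts, hT1edges, hT1eq⟩ :=
    RxAux.attach hT0conn hT0acyc x ax (by
      by_cases hx : x ∈ D
      · exact Or.inl ((haxin hx) ▸ haxT0)
      · refine Or.inr ⟨fun hmem => hx (hT0vertsD hmem), haxT0, ?_⟩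
        rw [haxout hx]
        exact ((hXYZ x hx).2.2.2.1).symm)
  -- attach y
  obtain ⟨T2, h12, hT2conn, hT2acyc, hyT2, hT2verts, hT2edges, hT2eq⟩ :=
    RxAux.attach hT1conn hT1acyc y ay (by
      by_cases hy : y ∈ D
      · exact Or.inl (SimpleGraph.Subgraph.verts_mono h01 ((hayin hy) ▸ hayT0))
      · refine Or.inr ⟨?_, SimpleGraph.Subgraph.verts_mono h01 hayT0, ?_⟩
        · intro hmem
          rcases hT1verts hmem with h | h
          · exact hy (hT0vertsD h)
          · exact hxy (h.symm)
        · rw [hayout hy]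
          exact ((hXYZ y hy).2.2.2.2.1).symm)
  -- attach z
  obtain ⟨T3, h23, hT3conn, hT3acyc, hzT3, hT3verts, hT3edges, hT3eq⟩ :=
    RxAux.attach hT2conn hT2acyc z az (by
      by_cases hz : z ∈ D
      · exact Or.inl (SimpleGraph.Subgraph.verts_mono (h01.trans h12)
          ((hazin hz) ▸ hazT0))
      · refine Or.inr ⟨?_, SimpleGraph.Subgraph.verts_mono (h01.trans h12) hazT0, ?_⟩
        · intro hmem
          rcases hT2verts hmem with h | h
          · rcases hT1verts h with h' | h'
            · exact hz (hT0vertsD h')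
            · exact hxz h'.symm
          · exact hyz h.symm
        · rw [hazout hz]
          exact ((hXYZ z hz).2.2.2.2.2.1).symm)
  refine ⟨T3, (RxAux.isTree_coe_iff T3).mpr ⟨hT3conn, hT3acyc⟩, ?_, ?_⟩
  · -- vertices
    intro s hs
    simp only [Finset.coe_insert, Finset.coe_singleton, Set.mem_insert_iff,
      Set.mem_singleton_iff] at hs
    rcases hs with rfl | rfl | rfl
    · exact SimpleGraph.Subgraph.verts_mono (h12.trans h23) hxT1
    · exact SimpleGraph.Subgraph.verts_mono h23 hyT2
    · exact hzT3
  · -- injectivity of the coloring on the edges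
    have hT0col : ∀ e ∈ T0.edgeSet, ∃ e' ∈ T'.edgeSet,
        e = Sym2.map f e' ∧ c' e = Fin.castLE (by omega) (cD e') := by
      intro e he
      induction e using Sym2.ind with
      | _ p q =>
        rw [SimpleGraph.Subgraph.mem_edgeSet, hT0def] at he
        obtain ⟨a, b, hab, rfl, rfl⟩ := he
        refine ⟨s(a, b), hab, rfl, ?_⟩
        rw [hc']
        exact RxAux.thecol_DD D cD X Y a.2 b.2
    have hv0 : ∀ e ∈ T0.edgeSet, (c' e).val < r := by
      intro e he
      obtain ⟨e', _, _, hcol⟩ := hT0col e he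
      rw [hcol]
      exact (cD e').isLt
    have hvx : x ∉ D → (c' s(ax, x)).val = r := by
      intro hx
      rw [hc', RxAux.thecol_pend D cD X Y hx haxD, haxout hx]
      exact RxAux.pcol_X X Y x
    have hvy : y ∉ D → (c' s(ay, y)).val = r + 1 := by
      intro hy
      rw [hc', RxAux.thecol_pend D cD X Y hy hayD, hayout hy]
      exact RxAux.pcol_Y X Y y (hXYZ y hy).2.2.2.2.2.2.1
    have hvz : z ∉ D → (c' s(az, z)).val = r + 2 := by
      intro hz
      rw [hc', RxAux.thecol_pend D cD X Y hz hazD, hazout hz]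
      exact RxAux.pcol_Z X Y z (Z z) (hXYZ z hz).2.2.2.2.2.2.2.1
        (hXYZ z hz).2.2.2.2.2.2.2.2
    have hcl2 : ∀ e ∈ T3.edgeSet, e ∈ T2.edgeSet ∨ (z ∉ D ∧ e = s(az, z)) := by
      intro e he
      by_cases hz : z ∈ D
      · left
        rwa [hT3eq (SimpleGraph.Subgraph.verts_mono (h01.trans h12)
          ((hazin hz) ▸ hazT0))] at he
      · rcases hT3edges he with h | h
        · exact Or.inl h
        · exact Or.inr ⟨hz, h⟩
    have hcl1 : ∀ e ∈ T2.edgeSet, e ∈ T1.edgeSet ∨ (y ∉ D ∧ e = s(ay, y)) := by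
      intro e he
      by_cases hy : y ∈ D
      · left
        rwa [hT2eq (SimpleGraph.Subgraph.verts_mono h01 ((hayin hy) ▸ hayT0))] at he
      · rcases hT2edges he with h | h
        · exact Or.inl h
        · exact Or.inr ⟨hy, h⟩
    have hcl0 : ∀ e ∈ T1.edgeSet, e ∈ T0.edgeSet ∨ (x ∉ D ∧ e = s(ax, x)) := by
      intro e he
      by_cases hx : x ∈ D
      · left
        rwa [hT1eq ((haxin hx) ▸ haxT0)] at he
      · rcases hT1edges he with h | h
        · exact Or.inl h
        · exact Or.inr ⟨hx, h⟩
    have hclass : ∀ e ∈ T3.edgeSet, e ∈ T0.edgeSet ∨ (x ∉ D ∧ e = s(ax, x)) ∨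
        (y ∉ D ∧ e = s(ay, y)) ∨ (z ∉ D ∧ e = s(az, z)) := by
      intro e he
      rcases hcl2 e he with h | h
      · rcases hcl1 e h with h' | h'
        · rcases hcl0 e h' with h'' | h''
          · exact Or.inl h''
          · exact Or.inr (Or.inl h'')
        · exact Or.inr (Or.inr (Or.inl h'))
      · exact Or.inr (Or.inr (Or.inr h))
    intro e1 h1 e2 h2 heq
    have q := congrArg Fin.val heq
    rcases hclass e1 h1 with c1 | c1 | c1 | c1 <;> rcases hclass e2 h2 with c2 | c2 | c2 | c2
    · obtain ⟨e1', he1', he1e, hcol1⟩ := hT0col e1 c1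
      obtain ⟨e2', he2', he2e, hcol2⟩ := hT0col e2 c2
      rw [hcol1, hcol2] at heq
      have heq' : cD e1' = cD e2' := by
        have qq := congrArg Fin.val heq
        simp only [Fin.coe_castLE] at qq
        exact Fin.ext qq
      rw [he1e, he2e, hT'inj he1' he2' heq']
    · exfalso; rw [c2.2, hvx c2.1] at q; have := hv0 e1 c1; omega
    · exfalso; rw [c2.2, hvy c2.1] at q; have := hv0 e1 c1; omega
    · exfalso; rw [c2.2, hvz c2.1] at q; have := hv0 e1 c1; omega
    · exfalso; rw [c1.2, hvx c1.1] at q; have := hv0 e2 c2; omega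
    · exact c1.2.trans c2.2.symm
    · exfalso; rw [c1.2, hvx c1.1, c2.2, hvy c2.1] at q; omega
    · exfalso; rw [c1.2, hvx c1.1, c2.2, hvz c2.1] at q; omega
    · exfalso; rw [c1.2, hvy c1.1] at q; have := hv0 e2 c2; omega
    · exfalso; rw [c1.2, hvy c1.1, c2.2, hvx c2.1] at q; omega
    · exact c1.2.trans c2.2.symm
    · exfalso; rw [c1.2, hvy c1.1, c2.2, hvz c2.1] at q; omega
    · exfalso; rw [c1.2, hvz c1.1] at q; have := hv0 e2 c2; omega
    · exfalso; rw [c1.2, hvz c1.1, c2.2, hvx c2.1] at q; omega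
    · exfalso; rw [c1.2, hvz c1.1, c2.2, hvy c2.1] at q; omega
    · exact c1.2.trans c2.2.symm
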